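/- arXiv:1902.03852 — 2 statements merged into one kernel-verified Lean document; each statement's English description precedes it below -/
import Mathlib

section
/- There exists a right ideal morphism f ∈ 2 RI^fin over the alphabet A = {0,1} (n = 2) that has two distinct maximal extensions in 2 RI^fin. Concretely, the morphism f with domC(f) = imC(f) = {(0,0), (0,1), (1,0), (1,10), (1,11)}, defined on its domain code by fixing (0,0), (0,1), (1,0) and interchanging (1,10) and (1,11), has exactly two maximal extensions in 2 RI^fin, and these two maximal extensions are distinct. -/
namespace BrinThompson

abbrev W (A : Type*) (n : ℕ) : Type _ := Fin n → List A

variable {A : Type*} {n : ℕ}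

/-- Coordinatewise concatenation in `nA*`. -/
def cat (u x : W A n) : W A n := fun i => u i ++ x i

/-- `u ≤_init v` : `u` is an initial factor of `v`. -/
def initLE (u v : W A n) : Prop := ∃ x : W A n, v = cat u x

/-- `w` is the join (least upper bound) of `u` and `v` w.r.t. `≤_init`. -/
def isJoin (u v w : W A n) : Prop :=
  initLE u w ∧ initLE v w ∧ ∀ z : W A n, initLE u z → initLE v z → initLE w z

/-- `u` and `v` have a join. -/
def HasJoin (u v : W A n) : Prop := ∃ w : W A n, isJoin u v w

/-- A joinless code: no two distinct elements have a join. -/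
def JoinlessCode (S : Set (W A n)) : Prop :=
  ∀ u ∈ S, ∀ v ∈ S, u ≠ v → ¬ HasJoin u v

/-- A maximal joinless code: joinless, and every element of `nA*` has a join
with some element of the code. -/
def MaxJoinlessCode (S : Set (W A n)) : Prop :=
  JoinlessCode S ∧ ∀ x : W A n, ∃ p ∈ S, HasJoin x p

/-- The right ideal `C · nA*` generated by `C`. -/
def genIdeal (C : Set (W A n)) : Set (W A n) := {w | ∃ c ∈ C, ∃ x : W A n, w = cat c x}

def IsRightIdeal (R : Set (W A n)) : Prop := genIdeal R = R

/-- An initial factor code: pairwise `≤_init`-incomparable set. -/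
def InitFactorCode (S : Set (W A n)) : Prop :=
  ∀ u ∈ S, ∀ v ∈ S, initLE u v → u = v

/-- `A_{ε,n}`: tuples with one coordinate a single letter and the rest empty. -/
def Aeps (A : Type*) (n : ℕ) : Set (W A n) :=
  {w | ∃ i : Fin n, ∃ a : A, w i = [a] ∧ ∀ j : Fin n, j ≠ i → w j = []}

/-- `(ε)^n`, the tuple of empty strings. -/
def epsn (A : Type*) (n : ℕ) : W A n := fun _ => []

/-- `nA^ω`: `n`-tuples of one-sided infinite sequences over `A`. -/
abbrev Winf (A : Type*) (n : ℕ) : Type _ := Fin n → ℕ → A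

/-- Concatenation of a finite tuple `p ∈ nA*` with an infinite tuple `u ∈ nA^ω`. -/
def catInf (p : W A n) (u : Winf A n) : Winf A n :=
  fun i k => if h : k < (p i).length then (p i).get ⟨k, h⟩ else u i (k - (p i).length)

/-- `v` is an interior vertex of the `P`-dag: a strict initial factor of
some element of `P`. -/
def Interior (P : Set (W A n)) (v : W A n) : Prop := ∃ p ∈ P, initLE v p ∧ v ≠ p

/-- The child of `v` in direction `i`, extended by letter `a`. -/
def child (v : W A n) (i : Fin n) (a : A) : W A n := Function.update v i (v i ++ [a])

/-- A leaf of the interior dag of `P`: an interior vertex none of whose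
children is interior. -/
def InteriorLeaf (P : Set (W A n)) (v : W A n) : Prop :=
  Interior P v ∧ ∀ (i : Fin n) (a : A), ¬ Interior P (child v i a)

/-- `v_+ = (v · A_{ε,n}) ∩ P`, the set of children of `v` belonging to `P`. -/
def vplus (P : Set (W A n)) (v : W A n) : Set (W A n) :=
  {w | (∃ (i : Fin n) (a : A), w = child v i a) ∧ w ∈ P}

/-- The depth of a vertex: the sum of the coordinate lengths. -/
def depth (v : W A n) : ℕ := ∑ i, (v i).length

/-- One-step restriction of `P` at `(p, i)`. -/
def oneStep (P : Set (W A n)) (p : W A n) (i : Fin n) : Set (W A n) :=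
  (P \ {p}) ∪ {w | ∃ a : A, w = child p i a}

/-- One step in a sequence of one-step restrictions. -/
def RestrStep (P Q : Set (W A n)) : Prop := ∃ p ∈ P, ∃ i : Fin n, Q = oneStep P p i

/-- The box code `A^{k_1} × … × A^{k_n}`. -/
def box (A : Type*) {n : ℕ} (k : Fin n → ℕ) : Set (W A n) :=
  {w | ∀ i : Fin n, (w i).length = k i}

/-- Elementwise join `P ∨ Q` of two sets, ranging over the joins that exist. -/
def setJoin (P Q : Set (W A n)) : Set (W A n) :=
  {w | ∃ p ∈ P, ∃ q ∈ Q, isJoin p q w}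

/-- `ℓ(S)`: the maximum coordinate length occurring in `S`. -/
noncomputable def ell (S : Set (W A n)) : ℕ :=
  sSup {m | ∃ z ∈ S, ∃ i : Fin n, (z i).length = m}

/-- An element of `n RI^fin_A`: an injective right ideal morphism of `nA*`
whose domain code and image code are finite maximal joinless codes.
`toFun` is a total function whose values outside `Dom` are irrelevant. -/
structure RIMfin (A : Type*) (n : ℕ) where
  Dom : Set (W A n)
  toFun : W A n → W A n
  domC : Set (W A n)
  imC : Set (W A n)
  ideal : IsRightIdeal Dom
  morph : ∀ x ∈ Dom, ∀ w : W A n, toFun (cat x w) = cat (toFun x) w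
  inj : Set.InjOn toFun Dom
  domC_gen : genIdeal domC = Dom
  imC_gen : genIdeal imC = toFun '' Dom
  domC_fin : domC.Finite
  domC_max : MaxJoinlessCode domC
  imC_fin : imC.Finite
  imC_max : MaxJoinlessCode imC

/-- `ℓ(f) = max{ℓ(z) : z ∈ domC(f) ∪ imC(f)}`. -/
noncomputable def ellF (F : RIMfin A n) : ℕ := ell (F.domC ∪ F.imC)

/-- `G` extends `F` (as partial functions). -/
def Extends (F G : RIMfin A n) : Prop :=
  F.Dom ⊆ G.Dom ∧ ∀ x ∈ F.Dom, G.toFun x = F.toFun x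

/-- `F` and `G` are equal as partial functions. -/
def EquivRIM (F G : RIMfin A n) : Prop :=
  F.Dom = G.Dom ∧ ∀ x ∈ F.Dom, F.toFun x = G.toFun x

/-- `G` is a maximal extension of `F` in `n RI^fin_A`. -/
def MaxExtension (F G : RIMfin A n) : Prop :=
  Extends F G ∧ ∀ H : RIMfin A n, Extends G H → EquivRIM G H


def w00 : W Bool 2 := ![[false], [false]]
def w01 : W Bool 2 := ![[false], [true]]
def w10 : W Bool 2 := ![[true], [false]]
def w110 : W Bool 2 := ![[true], [true, false]]
def w111 : W Bool 2 := ![[true], [true, true]]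

/-- The code `{(0,0), (0,1), (1,0), (1,10), (1,11)}` in `2{0,1}*`. -/
def P5 : Set (W Bool 2) := {w00, w01, w10, w110, w111}

/-! ### Auxiliary development for the proof -/

section Aux

open List

/-- basic evaluation of `cat`. -/
@[simp] lemma cat_apply (u x : W A n) (i : Fin n) : cat u x i = u i ++ x i := rfl

lemma cat_assoc (u v w : W A n) : cat (cat u v) w = cat u (cat v w) :=
  funext fun i => List.append_assoc _ _ _

@[simp] lemma cat_epsn (u : W A n) : cat u (epsn A n) = u :=
  funext fun i => List.append_nil _

lemma cat_right_cancel {u v w : W A n} (h : cat u w = cat v w) : u = v :=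
  funext fun i => List.append_cancel_right (congrFun h i)

lemma initLE_iff {u v : W A n} : initLE u v ↔ ∀ i, u i <+: v i := by
  constructor
  · rintro ⟨x, rfl⟩ i; exact List.prefix_append _ _
  · intro h
    refine ⟨fun i => (v i).drop (u i).length, funext fun i => ?_⟩
    exact ((List.prefix_iff_eq_append.mp (h i))).symm

lemma mem_genIdeal {C : Set (W A n)} {x : W A n} :
    x ∈ genIdeal C ↔ ∃ c ∈ C, ∀ i, c i <+: x i := by
  constructor
  · rintro ⟨c, hc, z, rfl⟩; exact ⟨c, hc, fun i => List.prefix_append _ _⟩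
  · rintro ⟨c, hc, h⟩; exact ⟨c, hc, initLE_iff.mpr h⟩

lemma hasJoin_iff {u v : W A n} :
    HasJoin u v ↔ ∀ i, u i <+: v i ∨ v i <+: u i := by
  classical
  constructor
  · rintro ⟨w, hu, hv, -⟩ i
    exact List.prefix_or_prefix_of_prefix (initLE_iff.mp hu i) (initLE_iff.mp hv i)
  · intro h
    refine ⟨fun i => if u i <+: v i then v i else u i, initLE_iff.mpr fun i => ?_,
      initLE_iff.mpr fun i => ?_, fun z hu hv => initLE_iff.mpr fun i => ?_⟩
    · split
      · assumption
      · exact List.prefix_rfl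
    · split
      · exact List.prefix_rfl
      · rcases h i with h' | h'
        · exact absurd h' (by assumption)
        · exact h'
    · have hu' := initLE_iff.mp hu i
      have hv' := initLE_iff.mp hv i
      split <;> assumption

lemma genIdeal_isRightIdeal (C : Set (W A n)) : IsRightIdeal (genIdeal C) := by
  apply Set.eq_of_subset_of_subset
  · rintro x ⟨c, ⟨d, hd, y, rfl⟩, z, rfl⟩
    exact ⟨d, hd, cat y z, (cat_assoc _ _ _)⟩
  · exact fun x hx => ⟨x, hx, epsn A n, (cat_epsn x).symm⟩

end Aux
section Hmap

/-- Flip the second letter of a word starting with `1`. -/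
def flip2 : List Bool → List Bool
  | true :: b :: r => true :: (!b) :: r
  | l => l

@[simp] lemma flip2_nil : flip2 [] = [] := rfl
@[simp] lemma flip2_false (l : List Bool) : flip2 (false :: l) = false :: l := rfl
@[simp] lemma flip2_singleton : flip2 [true] = [true] := rfl
@[simp] lemma flip2_cons (b : Bool) (r : List Bool) :
    flip2 (true :: b :: r) = true :: (!b) :: r := rfl

lemma flip2_flip2 (l : List Bool) : flip2 (flip2 l) = l := by
  match l with
  | [] => rfl
  | false :: r => rfl
  | [true] => rfl
  | true :: b :: r => simp

/-- The common underlying function of all our right ideal morphisms. -/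
def hmap (x : W Bool 2) : W Bool 2 :=
  ![x 0, if (x 0).head? = some true then flip2 (x 1) else x 1]

@[simp] lemma hmap_zero (x : W Bool 2) : hmap x 0 = x 0 := rfl

@[simp] lemma hmap_one (x : W Bool 2) :
    hmap x 1 = if (x 0).head? = some true then flip2 (x 1) else x 1 := rfl

lemma W2_ext {u v : W Bool 2} (h0 : u 0 = v 0) (h1 : u 1 = v 1) : u = v := by
  funext i
  fin_cases i
  · exact h0
  · exact h1

lemma hmap_hmap (x : W Bool 2) : hmap (hmap x) = x := by
  apply W2_ext
  · rfl
  · simp only [hmap_one, hmap_zero]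
    by_cases h : (x 0).head? = some true <;> simp [h, flip2_flip2]

lemma hmap_inj : Function.Injective hmap :=
  Function.Involutive.injective hmap_hmap

/-- `c` generates a piece of a right ideal morphism for `hmap`. -/
def GenOK (c : W Bool 2) : Prop := ∀ z : W Bool 2, hmap (cat c z) = cat (hmap c) z

lemma genOK_of_head_false {c : W Bool 2} (hc : (c 0).head? = some false) : GenOK c := by
  intro z
  rcases h : c 0 with _ | ⟨a, t⟩
  · simp [h] at hc
  · simp only [h, List.head?_cons, Option.some_inj] at hc
    subst hc
    apply W2_ext <;> simp [hmap, h]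

lemma genOK_of_c0_nil {c : W Bool 2} (hc : c 0 = []) (hc1 : ∃ t, c 1 = false :: t) :
    GenOK c := by
  intro z
  obtain ⟨t, ht⟩ := hc1
  apply W2_ext
  · simp
  · simp only [hmap_one, hmap_zero, cat_apply, hc, ht, List.nil_append, List.cons_append]
    split <;> simp

lemma genOK_of_true_false {c : W Bool 2} (h0 : ∃ t, c 0 = true :: t)
    (h1 : ∃ s, c 1 = false :: s) : GenOK c := by
  intro z
  obtain ⟨t, h0⟩ := h0
  obtain ⟨s, h1⟩ := h1
  apply W2_ext
  · simp
  · simp [hmap, h0, h1]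

lemma genOK_of_true_true {c : W Bool 2} (h0 : ∃ t, c 0 = true :: t)
    (h1 : ∃ b s, c 1 = true :: b :: s) : GenOK c := by
  intro z
  obtain ⟨t, h0⟩ := h0
  obtain ⟨b, s, h1⟩ := h1
  apply W2_ext
  · simp
  · simp [hmap, h0, h1]

end Hmap

section Codes

def e01 : W Bool 2 := ![[], [false]]
def e10 : W Bool 2 := ![[false], []]

/-- domain code of the first maximal extension. -/
def Q1 : Set (W Bool 2) := {e01, w01, w110, w111}
/-- domain code of the second maximal extension. -/
def Q2 : Set (W Bool 2) := {e10, w10, w110, w111}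

lemma hmap_w00 : hmap w00 = w00 := by decide
lemma hmap_w01 : hmap w01 = w01 := by decide
lemma hmap_w10 : hmap w10 = w10 := by decide
lemma hmap_w110 : hmap w110 = w111 := by decide
lemma hmap_w111 : hmap w111 = w110 := by decide
lemma hmap_e01 : hmap e01 = e01 := by decide
lemma hmap_e10 : hmap e10 = e10 := by decide

lemma genOK_P5 : ∀ c ∈ P5, GenOK c := by
  intro c hc
  rcases hc with rfl | rfl | rfl | rfl | rfl
  · exact genOK_of_head_false (by decide)
  · exact genOK_of_head_false (by decide)
  · exact genOK_of_true_false ⟨[], by decide⟩ ⟨[], by decide⟩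
  · exact genOK_of_true_true ⟨[], by decide⟩ ⟨false, [], by decide⟩
  · exact genOK_of_true_true ⟨[], by decide⟩ ⟨true, [], by decide⟩

lemma genOK_Q1 : ∀ c ∈ Q1, GenOK c := by
  intro c hc
  rcases hc with rfl | rfl | rfl | rfl
  · exact genOK_of_c0_nil (by decide) ⟨[], by decide⟩
  · exact genOK_of_head_false (by decide)
  · exact genOK_of_true_true ⟨[], by decide⟩ ⟨false, [], by decide⟩
  · exact genOK_of_true_true ⟨[], by decide⟩ ⟨true, [], by decide⟩

lemma genOK_Q2 : ∀ c ∈ Q2, GenOK c := by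
  intro c hc
  rcases hc with rfl | rfl | rfl | rfl
  · exact genOK_of_head_false (by decide)
  · exact genOK_of_true_false ⟨[], by decide⟩ ⟨[], by decide⟩
  · exact genOK_of_true_true ⟨[], by decide⟩ ⟨false, [], by decide⟩
  · exact genOK_of_true_true ⟨[], by decide⟩ ⟨true, [], by decide⟩

lemma hclosed_P5 : ∀ c ∈ P5, hmap c ∈ P5 := by
  intro c hc
  rcases hc with rfl | rfl | rfl | rfl | rfl <;>
    simp [P5, hmap_w00, hmap_w01, hmap_w10, hmap_w110, hmap_w111]

lemma hclosed_Q1 : ∀ c ∈ Q1, hmap c ∈ Q1 := by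
  intro c hc
  rcases hc with rfl | rfl | rfl | rfl <;>
    simp [Q1, hmap_e01, hmap_w01, hmap_w110, hmap_w111]

lemma hclosed_Q2 : ∀ c ∈ Q2, hmap c ∈ Q2 := by
  intro c hc
  rcases hc with rfl | rfl | rfl | rfl <;>
    simp [Q2, hmap_e10, hmap_w10, hmap_w110, hmap_w111]

lemma joinless_P5 : JoinlessCode P5 := by
  intro u hu v hv hne hj
  rw [hasJoin_iff] at hj
  rcases hu with rfl | rfl | rfl | rfl | rfl <;>
    rcases hv with rfl | rfl | rfl | rfl | rfl <;>
      first
        | exact hne rfl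
        | exact absurd hj (by decide)

lemma joinless_Q1 : JoinlessCode Q1 := by
  intro u hu v hv hne hj
  rw [hasJoin_iff] at hj
  rcases hu with rfl | rfl | rfl | rfl <;>
    rcases hv with rfl | rfl | rfl | rfl <;>
      first
        | exact hne rfl
        | exact absurd hj (by decide)

lemma joinless_Q2 : JoinlessCode Q2 := by
  intro u hu v hv hne hj
  rw [hasJoin_iff] at hj
  rcases hu with rfl | rfl | rfl | rfl <;>
    rcases hv with rfl | rfl | rfl | rfl <;>
      first
        | exact hne rfl
        | exact absurd hj (by decide)

end Codes

section MaxCodes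

lemma hasJoin_of {x p : W Bool 2} (h0 : x 0 <+: p 0 ∨ p 0 <+: x 0)
    (h1 : x 1 <+: p 1 ∨ p 1 <+: x 1) : HasJoin x p :=
  hasJoin_iff.mpr (Fin.forall_fin_two.mpr ⟨h0, h1⟩)

lemma max_P5 : ∀ x : W Bool 2, ∃ p ∈ P5, HasJoin x p := by
  intro x
  rcases h0 : x 0 with _ | ⟨a, t⟩
  · rcases h1 : x 1 with _ | ⟨b, s⟩
    · exact ⟨w00, by simp [P5], hasJoin_of (by simp [w00, h0]) (by simp [w00, h1])⟩
    · cases b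
      · exact ⟨w00, by simp [P5], hasJoin_of (by simp [w00, h0])
          (by simp [w00, h1, List.cons_prefix_cons])⟩
      · exact ⟨w01, by simp [P5], hasJoin_of (by simp [w01, h0])
          (by simp [w01, h1, List.cons_prefix_cons])⟩
  · cases a
    · rcases h1 : x 1 with _ | ⟨b, s⟩
      · exact ⟨w00, by simp [P5], hasJoin_of (by simp [w00, h0, List.cons_prefix_cons])
          (by simp [w00, h1])⟩
      · cases b
        · exact ⟨w00, by simp [P5], hasJoin_of (by simp [w00, h0, List.cons_prefix_cons])
            (by simp [w00, h1, List.cons_prefix_cons])⟩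
        · exact ⟨w01, by simp [P5], hasJoin_of (by simp [w01, h0, List.cons_prefix_cons])
            (by simp [w01, h1, List.cons_prefix_cons])⟩
    · rcases h1 : x 1 with _ | ⟨b, s⟩
      · exact ⟨w10, by simp [P5], hasJoin_of (by simp [w10, h0, List.cons_prefix_cons])
          (by simp [w10, h1])⟩
      · cases b
        · exact ⟨w10, by simp [P5], hasJoin_of (by simp [w10, h0, List.cons_prefix_cons])
            (by simp [w10, h1, List.cons_prefix_cons])⟩
        · rcases h1' : s with _ | ⟨c, r⟩
          · exact ⟨w110, by simp [P5], hasJoin_of (by simp [w110, h0, List.cons_prefix_cons])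
              (by rw [h1, h1']; exact Or.inl ⟨[false], rfl⟩)⟩
          · cases c
            · exact ⟨w110, by simp [P5], hasJoin_of (by simp [w110, h0, List.cons_prefix_cons])
                (by rw [h1, h1']; exact Or.inr ⟨r, rfl⟩)⟩
            · exact ⟨w111, by simp [P5], hasJoin_of (by simp [w111, h0, List.cons_prefix_cons])
                (by rw [h1, h1']; exact Or.inr ⟨r, rfl⟩)⟩

lemma max_Q1 : ∀ x : W Bool 2, ∃ p ∈ Q1, HasJoin x p := by
  intro x
  rcases h1 : x 1 with _ | ⟨b, s⟩
  · exact ⟨e01, by simp [Q1], hasJoin_of (by simp [e01]) (by simp [e01, h1])⟩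
  · cases b
    · exact ⟨e01, by simp [Q1], hasJoin_of (by simp [e01])
        (by simp [e01, h1, List.cons_prefix_cons])⟩
    · rcases h0 : x 0 with _ | ⟨a, t⟩
      · exact ⟨w01, by simp [Q1], hasJoin_of (by simp [w01, h0])
          (by simp [w01, h1, List.cons_prefix_cons])⟩
      · cases a
        · exact ⟨w01, by simp [Q1], hasJoin_of (by simp [w01, h0, List.cons_prefix_cons])
            (by simp [w01, h1, List.cons_prefix_cons])⟩
        · rcases h1' : s with _ | ⟨c, r⟩
          · exact ⟨w110, by simp [Q1], hasJoin_of (by simp [w110, h0, List.cons_prefix_cons])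
              (by rw [h1, h1']; exact Or.inl ⟨[false], rfl⟩)⟩
          · cases c
            · exact ⟨w110, by simp [Q1], hasJoin_of (by simp [w110, h0, List.cons_prefix_cons])
                (by rw [h1, h1']; exact Or.inr ⟨r, rfl⟩)⟩
            · exact ⟨w111, by simp [Q1], hasJoin_of (by simp [w111, h0, List.cons_prefix_cons])
                (by rw [h1, h1']; exact Or.inr ⟨r, rfl⟩)⟩

lemma max_Q2 : ∀ x : W Bool 2, ∃ p ∈ Q2, HasJoin x p := by
  intro x
  rcases h0 : x 0 with _ | ⟨a, t⟩
  · exact ⟨e10, by simp [Q2], hasJoin_of (by simp [e10, h0]) (by simp [e10])⟩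
  · cases a
    · exact ⟨e10, by simp [Q2], hasJoin_of (by simp [e10, h0, List.cons_prefix_cons])
        (by simp [e10])⟩
    · rcases h1 : x 1 with _ | ⟨b, s⟩
      · exact ⟨w10, by simp [Q2], hasJoin_of (by simp [w10, h0, List.cons_prefix_cons])
          (by simp [w10, h1])⟩
      · cases b
        · exact ⟨w10, by simp [Q2], hasJoin_of (by simp [w10, h0, List.cons_prefix_cons])
            (by simp [w10, h1, List.cons_prefix_cons])⟩
        · rcases h1' : s with _ | ⟨c, r⟩
          · exact ⟨w110, by simp [Q2], hasJoin_of (by simp [w110, h0, List.cons_prefix_cons])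
              (by rw [h1, h1']; exact Or.inl ⟨[false], rfl⟩)⟩
          · cases c
            · exact ⟨w110, by simp [Q2], hasJoin_of (by simp [w110, h0, List.cons_prefix_cons])
                (by rw [h1, h1']; exact Or.inr ⟨r, rfl⟩)⟩
            · exact ⟨w111, by simp [Q2], hasJoin_of (by simp [w111, h0, List.cons_prefix_cons])
                (by rw [h1, h1']; exact Or.inr ⟨r, rfl⟩)⟩

end MaxCodes

section Instances

lemma image_genIdeal {C : Set (W Bool 2)} (hgen : ∀ c ∈ C, GenOK c)
    (hcl : ∀ c ∈ C, hmap c ∈ C) : genIdeal C = hmap '' genIdeal C := by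
  apply Set.eq_of_subset_of_subset
  · rintro x ⟨c, hc, z, rfl⟩
    refine ⟨cat (hmap c) z, ⟨hmap c, hcl c hc, z, rfl⟩, ?_⟩
    rw [hgen (hmap c) (hcl c hc) z, hmap_hmap]
  · rintro _ ⟨x, ⟨c, hc, z, rfl⟩, rfl⟩
    rw [hgen c hc z]
    exact ⟨hmap c, hcl c hc, z, rfl⟩

/-- Build an element of `2 RI^fin` with underlying function `hmap` from a
suitable finite maximal joinless code. -/
def mkRIM (C : Set (W Bool 2)) (hgen : ∀ c ∈ C, GenOK c) (hcl : ∀ c ∈ C, hmap c ∈ C)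
    (hfin : C.Finite) (hmax : MaxJoinlessCode C) : RIMfin Bool 2 where
  Dom := genIdeal C
  toFun := hmap
  domC := C
  imC := C
  ideal := genIdeal_isRightIdeal C
  morph := by
    rintro x ⟨c, hc, z, rfl⟩ w
    rw [cat_assoc, hgen c hc, hgen c hc, cat_assoc]
  inj := fun x _ y _ h => hmap_inj h
  domC_gen := rfl
  imC_gen := image_genIdeal hgen hcl
  domC_fin := hfin
  domC_max := hmax
  imC_fin := hfin
  imC_max := hmax

lemma fin_P5 : P5.Finite := by
  apply Set.Finite.insert; apply Set.Finite.insert; apply Set.Finite.insert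
  apply Set.Finite.insert; exact Set.finite_singleton _

lemma fin_Q1 : Q1.Finite := by
  apply Set.Finite.insert; apply Set.Finite.insert; apply Set.Finite.insert
  exact Set.finite_singleton _

lemma fin_Q2 : Q2.Finite := by
  apply Set.Finite.insert; apply Set.Finite.insert; apply Set.Finite.insert
  exact Set.finite_singleton _

def FF : RIMfin Bool 2 := mkRIM P5 genOK_P5 hclosed_P5 fin_P5 ⟨joinless_P5, max_P5⟩
def GG1 : RIMfin Bool 2 := mkRIM Q1 genOK_Q1 hclosed_Q1 fin_Q1 ⟨joinless_Q1, max_Q1⟩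
def GG2 : RIMfin Bool 2 := mkRIM Q2 genOK_Q2 hclosed_Q2 fin_Q2 ⟨joinless_Q2, max_Q2⟩

@[simp] lemma FF_Dom : FF.Dom = genIdeal P5 := rfl
@[simp] lemma FF_toFun : FF.toFun = hmap := rfl
@[simp] lemma GG1_Dom : GG1.Dom = genIdeal Q1 := rfl
@[simp] lemma GG1_toFun : GG1.toFun = hmap := rfl
@[simp] lemma GG2_Dom : GG2.Dom = genIdeal Q2 := rfl
@[simp] lemma GG2_toFun : GG2.toFun = hmap := rfl

end Instances

section Membership

lemma mem_of_code {C : Set (W Bool 2)} {c x : W Bool 2} (hc : c ∈ C)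
    (h0 : c 0 <+: x 0) (h1 : c 1 <+: x 1) : x ∈ genIdeal C :=
  mem_genIdeal.mpr ⟨c, hc, Fin.forall_fin_two.mpr ⟨h0, h1⟩⟩

lemma memDF_ff {x : W Bool 2} (h0 : ∃ t, x 0 = false :: t) (h1 : x 1 ≠ []) :
    x ∈ genIdeal P5 := by
  obtain ⟨t, h0⟩ := h0
  rcases h1' : x 1 with _ | ⟨b, s⟩
  · exact absurd h1' h1
  · cases b
    · exact mem_of_code (c := w00) (by simp [P5])
        (by simp [w00, h0, List.cons_prefix_cons])
        (by simp [w00, h1', List.cons_prefix_cons])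
    · exact mem_of_code (c := w01) (by simp [P5])
        (by simp [w01, h0, List.cons_prefix_cons])
        (by simp [w01, h1', List.cons_prefix_cons])

lemma memDF_tf {x : W Bool 2} (h0 : ∃ t, x 0 = true :: t) (h1 : ∃ s, x 1 = false :: s) :
    x ∈ genIdeal P5 := by
  obtain ⟨t, h0⟩ := h0
  obtain ⟨s, h1⟩ := h1
  exact mem_of_code (c := w10) (by simp [P5])
    (by simp [w10, h0, List.cons_prefix_cons])
    (by simp [w10, h1, List.cons_prefix_cons])

lemma memDF_tt {x : W Bool 2} (h0 : ∃ t, x 0 = true :: t)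
    (h1 : ∃ b s, x 1 = true :: b :: s) : x ∈ genIdeal P5 := by
  obtain ⟨t, h0⟩ := h0
  obtain ⟨b, s, h1⟩ := h1
  cases b
  · exact mem_of_code (c := w110) (by simp [P5])
      (by simp [w110, h0, List.cons_prefix_cons])
      (by simp [w110, h1, List.cons_prefix_cons])
  · exact mem_of_code (c := w111) (by simp [P5])
      (by simp [w111, h0, List.cons_prefix_cons])
      (by simp [w111, h1, List.cons_prefix_cons])

lemma genIdeal_subset {C D : Set (W Bool 2)} (h : ∀ c ∈ C, ∃ q ∈ D, ∀ i, q i <+: c i) :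
    genIdeal C ⊆ genIdeal D := by
  rintro x ⟨c, hc, z, rfl⟩
  obtain ⟨q, hq, hle⟩ := h c hc
  exact mem_genIdeal.mpr ⟨q, hq, fun i => (hle i).trans (List.prefix_append _ _)⟩

lemma DF_subset_G1 : genIdeal P5 ⊆ genIdeal Q1 := by
  apply genIdeal_subset
  intro c hc
  rcases hc with rfl | rfl | rfl | rfl | rfl
  exacts [⟨e01, by simp [Q1], by decide⟩, ⟨w01, by simp [Q1], by decide⟩,
    ⟨e01, by simp [Q1], by decide⟩, ⟨w110, by simp [Q1], by decide⟩,
    ⟨w111, by simp [Q1], by decide⟩]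

lemma DF_subset_G2 : genIdeal P5 ⊆ genIdeal Q2 := by
  apply genIdeal_subset
  intro c hc
  rcases hc with rfl | rfl | rfl | rfl | rfl
  exacts [⟨e10, by simp [Q2], by decide⟩, ⟨e10, by simp [Q2], by decide⟩,
    ⟨w10, by simp [Q2], by decide⟩, ⟨w110, by simp [Q2], by decide⟩,
    ⟨w111, by simp [Q2], by decide⟩]

end Membership

section Step1

/-- A shape predicate: `x` lies in `Dom G₁ ∪ Dom G₂`. -/
def GoodW (x : W Bool 2) : Prop :=
  (x 1).head? = some false ∨ (x 0).head? = some false ∨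
    ((x 0).head? = some true ∧ ∃ b s, x 1 = true :: b :: s)

lemma step1 (H : RIMfin Bool 2) (hdom : genIdeal P5 ⊆ H.Dom)
    (hagree : ∀ x ∈ genIdeal P5, H.toFun x = hmap x) :
    ∀ x ∈ H.Dom, H.toFun x = hmap x ∧ GoodW x := by
  intro x hx
  have key : ∀ w, cat x w ∈ genIdeal P5 → cat (H.toFun x) w = hmap (cat x w) :=
    fun w hw => by rw [← H.morph x hx w, hagree _ hw]
  rcases h0 : x 0 with _ | ⟨a, t⟩
  · rcases h1 : x 1 with _ | ⟨b, s⟩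
    · -- x = (ε, ε) : impossible
      exfalso
      have hmem : cat x ![[true], [true, false]] ∈ genIdeal P5 :=
        memDF_tt ⟨[], by simp [h0]⟩ ⟨false, [], by simp [h1]⟩
      have h2 := congrFun (key _ hmem) 1
      simp [hmap, h0, h1] at h2
      have hl := congrArg List.length h2
      simp at hl
      rw [hl] at h2
      simp at h2
    · -- x = (ε, b :: s) : first compute H x = x
      have hmem : cat x e10 ∈ genIdeal P5 :=
        memDF_ff ⟨[], by simp [e10, h0]⟩ (by simp [e10, h1])
      have hkey := key e10 hmem
      have hm : hmap (cat x e10) = cat x e10 := W2_ext rfl (by simp [e10, h0])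
      rw [hm] at hkey
      have hx' : H.toFun x = x := cat_right_cancel hkey
      cases b
      · refine ⟨?_, Or.inl (by simp [h1])⟩
        rw [hx']
        exact (W2_ext (u := hmap x) (v := x) rfl (by simp [h0])).symm
      · -- x = (ε, true :: s) : impossible
        exfalso
        rcases h1' : s with _ | ⟨c, r⟩
        · have hmem2 : cat x ![[true], [false]] ∈ genIdeal P5 :=
            memDF_tt ⟨[], by simp [h0]⟩ ⟨false, [], by simp [h1, h1']⟩
          have h2 := congrFun (key _ hmem2) 1
          rw [hx'] at h2
          simp [hmap, h0, h1, h1'] at h2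
        · cases c
          · have hmem2 : cat x ![[true], []] ∈ genIdeal P5 :=
              memDF_tt ⟨[], by simp [h0]⟩ ⟨false, r, by simp [h1, h1']⟩
            have h2 := congrFun (key _ hmem2) 1
            rw [hx'] at h2
            simp [hmap, h0, h1, h1'] at h2
          · have hmem2 : cat x ![[true], []] ∈ genIdeal P5 :=
              memDF_tt ⟨[], by simp [h0]⟩ ⟨true, r, by simp [h1, h1']⟩
            have h2 := congrFun (key _ hmem2) 1
            rw [hx'] at h2
            simp [hmap, h0, h1, h1'] at h2
  · cases a
    · -- x = (false :: t, v)
      have hmem : cat x e01 ∈ genIdeal P5 :=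
        memDF_ff ⟨t, by simp [e01, h0]⟩ (by simp [e01])
      have hkey := key e01 hmem
      have hm : hmap (cat x e01) = cat x e01 := W2_ext rfl (by simp [e01, h0])
      rw [hm] at hkey
      have hx' : H.toFun x = x := cat_right_cancel hkey
      refine ⟨?_, Or.inr (Or.inl (by simp [h0]))⟩
      rw [hx']
      exact (W2_ext (u := hmap x) (v := x) rfl (by simp [h0])).symm
    · -- x = (true :: t, v)
      rcases h1 : x 1 with _ | ⟨b, s⟩
      · -- v = ε : impossible
        exfalso
        have hmem : cat x ![[], [true, false]] ∈ genIdeal P5 :=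
          memDF_tt ⟨t, by simp [h0]⟩ ⟨false, [], by simp [h1]⟩
        have h2 := congrFun (key _ hmem) 1
        simp [hmap, h0, h1] at h2
        have hl := congrArg List.length h2
        simp at hl
        rw [hl] at h2
        simp at h2
      · cases b
        · -- v = false :: s : x ∈ Dom F
          exact ⟨hagree x (memDF_tf ⟨t, h0⟩ ⟨s, h1⟩), Or.inl (by simp [h1])⟩
        · rcases h1' : s with _ | ⟨c, r⟩
          · -- v = [true] : impossible
            exfalso
            have hmem : cat x e01 ∈ genIdeal P5 :=
              memDF_tt ⟨t, by simp [e01, h0]⟩ ⟨false, [], by simp [e01, h1, h1']⟩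
            have h2 := congrFun (key _ hmem) 1
            simp [hmap, e01, h0, h1, h1'] at h2
            have hl := congrArg List.length h2
            simp at hl
            obtain ⟨d, hd⟩ := List.length_eq_one_iff.mp hl
            rw [hd] at h2
            simp at h2
          · -- v = true :: c :: r : x ∈ Dom F
            refine ⟨hagree x (memDF_tt ⟨t, h0⟩ ⟨c, r, by rw [h1, h1']⟩),
              Or.inr (Or.inr ⟨by simp [h0], c, r, by rw [h1, h1']⟩)⟩

end Step1

section Classify

lemma domC_subset_Dom (H : RIMfin Bool 2) : H.domC ⊆ H.Dom := fun r hr =>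
  H.domC_gen ▸ ⟨r, hr, epsn _ _, (cat_epsn r).symm⟩

/-- The domain of an extension of `F` cannot contain both a point with empty
first coordinate and a point with empty second coordinate. -/
lemma not_both (H : RIMfin Bool 2) (hdom : genIdeal P5 ⊆ H.Dom)
    (hagree : ∀ x ∈ genIdeal P5, H.toFun x = hmap x) {x y : W Bool 2}
    (hx : x ∈ H.Dom) (hx0 : x 0 = []) (hy : y ∈ H.Dom) (hy1 : y 1 = []) : False := by
  obtain ⟨p, hp, hpx⟩ := mem_genIdeal.mp (show x ∈ genIdeal H.domC by rw [H.domC_gen]; exact hx)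
  obtain ⟨q, hq, hqy⟩ := mem_genIdeal.mp (show y ∈ genIdeal H.domC by rw [H.domC_gen]; exact hy)
  have hp0 : p 0 = [] := List.prefix_nil.mp (hx0 ▸ hpx 0)
  have hq1 : q 1 = [] := List.prefix_nil.mp (hy1 ▸ hqy 1)
  have hgoodp := (step1 H hdom hagree p (domC_subset_Dom H hp)).2
  have hgoodq := (step1 H hdom hagree q (domC_subset_Dom H hq)).2
  have hp1 : p 1 ≠ [] := by
    intro h
    rcases hgoodp with h' | h' | ⟨h', -⟩ <;> simp [hp0, h] at h'
  have hq0 : q 0 ≠ [] := by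
    intro h
    rcases hgoodq with h' | h' | ⟨h', -⟩ <;> simp [hq1, h] at h'
  have hne : p ≠ q := fun h => hq0 (by rw [← h, hp0])
  exact H.domC_max.1 p hp q hq hne
    (hasJoin_of (Or.inl (by rw [hp0]; exact List.nil_prefix))
      (Or.inr (by rw [hq1]; exact List.nil_prefix)))

lemma classify (H : RIMfin Bool 2) (hdom : genIdeal P5 ⊆ H.Dom)
    (hagree : ∀ x ∈ genIdeal P5, H.toFun x = hmap x) :
    Extends H GG1 ∨ Extends H GG2 := by
  have hval : ∀ x ∈ H.Dom, GG1.toFun x = H.toFun x :=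
    fun x hx => ((step1 H hdom hagree x hx).1).symm
  by_cases hε : ∃ x ∈ H.Dom, x 0 = []
  · left
    refine ⟨?_, hval⟩
    intro y hy
    obtain ⟨x, hx, hx0⟩ := hε
    have hgood := (step1 H hdom hagree y hy).2
    show y ∈ genIdeal Q1
    rcases hy1 : y 1 with _ | ⟨b, s⟩
    · exact absurd (not_both H hdom hagree hx hx0 hy hy1) not_false
    · cases b
      · exact mem_of_code (c := e01) (by simp [Q1]) (by simp [e01])
          (by simp [e01, hy1, List.cons_prefix_cons])
      · -- y 1 = true :: s; use GoodW
        rcases hgood with h' | h' | ⟨h', c, r, h''⟩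
        · rw [hy1] at h'; simp at h'
        · rcases hy0 : y 0 with _ | ⟨a, t⟩
          · rw [hy0] at h'; simp at h'
          · rw [hy0] at h'; simp at h'
            subst h'
            exact mem_of_code (c := w01) (by simp [Q1])
              (by simp [w01, hy0, List.cons_prefix_cons])
              (by simp [w01, hy1, List.cons_prefix_cons])
        · rcases hy0 : y 0 with _ | ⟨a, t⟩
          · rw [hy0] at h'; simp at h'
          · rw [hy0] at h'; simp at h'
            subst h'
            cases c
            · exact mem_of_code (c := w110) (by simp [Q1])
                (by simp [w110, hy0, List.cons_prefix_cons])
                (by simp [w110, h'', List.cons_prefix_cons])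
            · exact mem_of_code (c := w111) (by simp [Q1])
                (by simp [w111, hy0, List.cons_prefix_cons])
                (by simp [w111, h'', List.cons_prefix_cons])
  · right
    refine ⟨?_, hval⟩
    intro y hy
    push_neg at hε
    have hgood := (step1 H hdom hagree y hy).2
    show y ∈ genIdeal Q2
    rcases hy0 : y 0 with _ | ⟨a, t⟩
    · exact absurd hy0 (hε y hy)
    · cases a
      · exact mem_of_code (c := e10) (by simp [Q2])
          (by simp [e10, hy0, List.cons_prefix_cons]) (by simp [e10])
      · rcases hgood with h' | h' | ⟨-, c, r, h''⟩
        · rcases hy1 : y 1 with _ | ⟨b, s⟩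
          · rw [hy1] at h'; simp at h'
          · rw [hy1] at h'; simp at h'
            subst h'
            exact mem_of_code (c := w10) (by simp [Q2])
              (by simp [w10, hy0, List.cons_prefix_cons])
              (by simp [w10, hy1, List.cons_prefix_cons])
        · rw [hy0] at h'; simp at h'
        · cases c
          · exact mem_of_code (c := w110) (by simp [Q2])
              (by simp [w110, hy0, List.cons_prefix_cons])
              (by simp [w110, h'', List.cons_prefix_cons])
          · exact mem_of_code (c := w111) (by simp [Q2])
              (by simp [w111, hy0, List.cons_prefix_cons])
              (by simp [w111, h'', List.cons_prefix_cons])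

end Classify

section Final

lemma self_mem_genIdeal {C : Set (W Bool 2)} {c : W Bool 2} (hc : c ∈ C) :
    c ∈ genIdeal C := ⟨c, hc, epsn _ _, (cat_epsn c).symm⟩

lemma e01_notMem_G2 : e01 ∉ genIdeal Q2 := by
  intro h
  obtain ⟨c, hc, hle⟩ := mem_genIdeal.mp h
  rcases hc with rfl | rfl | rfl | rfl <;> exact absurd (hle 0) (by decide)

lemma e10_notMem_G1 : e10 ∉ genIdeal Q1 := by
  intro h
  obtain ⟨c, hc, hle⟩ := mem_genIdeal.mp h
  rcases hc with rfl | rfl | rfl | rfl <;> exact absurd (hle 1) (by decide)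

lemma extends_FF_GG1 : Extends FF GG1 := ⟨DF_subset_G1, fun _ _ => rfl⟩
lemma extends_FF_GG2 : Extends FF GG2 := ⟨DF_subset_G2, fun _ _ => rfl⟩

lemma hyps_of_extends {H : RIMfin Bool 2} (h : Extends FF H) :
    genIdeal P5 ⊆ H.Dom ∧ ∀ x ∈ genIdeal P5, H.toFun x = hmap x :=
  ⟨h.1, fun x hx => h.2 x hx⟩

lemma maxext_GG1 : MaxExtension FF GG1 := by
  refine ⟨extends_FF_GG1, fun H hH => ?_⟩
  have hFH : Extends FF H := ⟨DF_subset_G1.trans hH.1, fun x hx => hH.2 x (DF_subset_G1 hx)⟩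
  obtain ⟨hdom, hagree⟩ := hyps_of_extends hFH
  rcases classify H hdom hagree with hc | hc
  · exact ⟨Set.eq_of_subset_of_subset hH.1 hc.1,
      fun x hx => hc.2 x (hH.1 hx)⟩
  · exact absurd (hc.1 (hH.1 (self_mem_genIdeal (by simp [Q1])))) e01_notMem_G2

lemma maxext_GG2 : MaxExtension FF GG2 := by
  refine ⟨extends_FF_GG2, fun H hH => ?_⟩
  have hFH : Extends FF H := ⟨DF_subset_G2.trans hH.1, fun x hx => hH.2 x (DF_subset_G2 hx)⟩
  obtain ⟨hdom, hagree⟩ := hyps_of_extends hFH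
  rcases classify H hdom hagree with hc | hc
  · exact absurd (hc.1 (hH.1 (self_mem_genIdeal (by simp [Q2])))) e10_notMem_G1
  · exact ⟨Set.eq_of_subset_of_subset hH.1 hc.1,
      fun x hx => hc.2 x (hH.1 hx)⟩

end Final


/-- There is an element of `2 RI^fin` (with domain and image code `P5`, fixing
`(0,0), (0,1), (1,0)` and interchanging `(1,10)` and `(1,11)`) that has exactly
two maximal extensions in `2 RI^fin`, and these are distinct. -/
theorem exists_two_maximal_extensions :
    ∃ F : RIMfin Bool 2,
      F.domC = P5 ∧ F.imC = P5 ∧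
      F.toFun w00 = w00 ∧ F.toFun w01 = w01 ∧ F.toFun w10 = w10 ∧
      F.toFun w110 = w111 ∧ F.toFun w111 = w110 ∧
      ∃ G₁ G₂ : RIMfin Bool 2,
        MaxExtension F G₁ ∧ MaxExtension F G₂ ∧ ¬ EquivRIM G₁ G₂ ∧
        ∀ H : RIMfin Bool 2, MaxExtension F H →
          EquivRIM H G₁ ∨ EquivRIM H G₂ := by
  refine ⟨FF, rfl, rfl, hmap_w00, hmap_w01, hmap_w10, hmap_w110, hmap_w111,
    GG1, GG2, maxext_GG1, maxext_GG2, ?_, ?_⟩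
  · rintro ⟨hdom, -⟩
    apply e01_notMem_G2
    have h1 : e01 ∈ GG1.Dom := self_mem_genIdeal (by simp [Q1])
    rw [hdom] at h1
    exact h1
  · intro H hH
    obtain ⟨hdom, hagree⟩ := hyps_of_extends hH.1
    rcases classify H hdom hagree with hc | hc
    · exact Or.inl (hH.2 GG1 hc)
    · exact Or.inr (hH.2 GG2 hc)


end BrinThompson
end

section
/- For every g ∈ V: g ∈ pFix_V(0) if and only if g∘f = f∘g for every f ∈ pFix_V(1). In words, an element g of the Thompson group V fixes pointwise all infinite binary sequences beginning with 0 if and only if g commutes with every element of V that fixes pointwise all infinite binary sequences beginning with 1. -/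
/-- Concatenation of a finite binary string with an infinite binary sequence. -/
def catC (p : List Bool) (u : ℕ → Bool) : ℕ → Bool :=
  fun k => if h : k < p.length then p.get ⟨k, h⟩ else u (k - p.length)

/-- A finite maximal prefix code over `{0,1}`: a finite set of pairwise
prefix-incomparable strings such that every infinite binary sequence has a
prefix in the set. -/
def MaxPrefixCode (P : Set (List Bool)) : Prop :=
  P.Finite ∧ (∀ p ∈ P, ∀ q ∈ P, p <+: q → p = q) ∧
  ∀ w : ℕ → Bool, ∃ p ∈ P, ∃ u : ℕ → Bool, w = catC p u

/-- Membership in the Thompson group `V`, viewed as a group of permutations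
of the Cantor space `{0,1}^ω` given by tables between finite maximal prefix
codes. -/
def InV (g : (ℕ → Bool) → (ℕ → Bool)) : Prop :=
  Function.Bijective g ∧
  ∃ P Q : Set (List Bool), MaxPrefixCode P ∧ MaxPrefixCode Q ∧
    ∃ F : List Bool → List Bool, Set.BijOn F P Q ∧
      ∀ p ∈ P, ∀ u : ℕ → Bool, g (catC p u) = catC (F p) u

/-- `g` fixes pointwise all sequences beginning with the bit `a`
(`a = false` for `pFix_V(0)`, `a = true` for `pFix_V(1)`). -/
def pFixV (a : Bool) (g : (ℕ → Bool) → (ℕ → Bool)) : Prop :=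
  ∀ u : ℕ → Bool, g (catC [a] u) = catC [a] u

namespace CommAux

lemma catC_lt {p : List Bool} {u : ℕ → Bool} {k : ℕ} (h : k < p.length) :
    catC p u k = p.getD k false := by
  simp [catC, h, List.getD_eq_getElem?_getD, List.getElem?_eq_getElem h]

lemma catC_ge {p : List Bool} {u : ℕ → Bool} {k : ℕ} (h : p.length ≤ k) :
    catC p u k = u (k - p.length) := by
  simp [catC, Nat.not_lt.mpr h]

lemma catC_single_zero (b : Bool) (u : ℕ → Bool) : catC [b] u 0 = b := by
  simp [catC]

lemma eq_catC_head_tail (w : ℕ → Bool) : w = catC [w 0] (fun k => w (k+1)) := by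
  funext k
  cases k with
  | zero => simp [catC]
  | succ k => simp [catC]

lemma fix_of {a : Bool} {g : (ℕ → Bool) → (ℕ → Bool)} (h : pFixV a g)
    {w : ℕ → Bool} (hw : w 0 = a) : g w = w := by
  have hw' : w = catC [a] (fun k => w (k+1)) := by
    rw [← hw]; exact eq_catC_head_tail w
  rw [hw']; exact h _

lemma bit_preserve {a : Bool} {g : (ℕ → Bool) → (ℕ → Bool)}
    (hg : Function.Injective g) (h : pFixV a g)
    {w : ℕ → Bool} (hw : w 0 = !a) : g w 0 = !a := by
  have hcases : g w 0 = a ∨ g w 0 = !a := by cases g w 0 <;> cases a <;> simp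
  rcases hcases with hga | hga
  · have h3 : g w = w := hg (fix_of h hga)
    rw [h3, hw] at hga
    exact absurd hga (by cases a <;> simp)
  · exact hga

/-! ### The flip-inside-a-cylinder elements of `V` -/

/-- `Matches t w` : the first `t.length` coordinates of `w` spell out `t`. -/
def Matches (t : List Bool) (w : ℕ → Bool) : Prop :=
  ∀ i < t.length, w i = t.getD i false

instance (t : List Bool) (w : ℕ → Bool) : Decidable (Matches t w) :=
  Nat.decidableBallLT _ _

/-- Flip coordinate `t.length` of sequences whose prefix is `t`; identity elsewhere. -/
def flipAt (t : List Bool) (w : ℕ → Bool) : ℕ → Bool :=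
  fun k => if Matches t w ∧ k = t.length then !(w k) else w k

lemma flipAt_of_not_matches {t : List Bool} {w : ℕ → Bool} (h : ¬ Matches t w) :
    flipAt t w = w := by
  funext k; simp [flipAt, h]

lemma flipAt_lt {t : List Bool} {w : ℕ → Bool} {i : ℕ} (h : i < t.length) :
    flipAt t w i = w i := by
  simp [flipAt, Nat.ne_of_lt h]

lemma flipAt_of_matches {t : List Bool} {w : ℕ → Bool} (h : Matches t w) :
    flipAt t w t.length = !(w t.length) := by
  simp [flipAt, h]

lemma flipAt_of_ne {t : List Bool} {w : ℕ → Bool} {k : ℕ} (h : k ≠ t.length) :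
    flipAt t w k = w k := by
  simp [flipAt, h]

lemma matches_flipAt {t : List Bool} {w : ℕ → Bool} :
    Matches t (flipAt t w) ↔ Matches t w := by
  have key : ∀ i, i < t.length → flipAt t w i = w i := fun i hi => flipAt_lt hi
  constructor <;> intro h i hi
  · rw [← key i hi]; exact h i hi
  · rw [key i hi]; exact h i hi

lemma flipAt_involutive (t : List Bool) : Function.Involutive (flipAt t) := by
  intro w
  by_cases h : Matches t w
  · funext k
    by_cases hk : k = t.length
    · subst hk
      rw [flipAt_of_matches (matches_flipAt.2 h), flipAt_of_matches h, Bool.not_not]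
    · rw [flipAt_of_ne hk, flipAt_of_ne hk]
  · rw [flipAt_of_not_matches (fun hm => h (matches_flipAt.1 hm)),
      flipAt_of_not_matches h]

lemma getD_prefix {t l : List Bool} {i : ℕ} (hi : i < t.length) (h : t <+: l) :
    l.getD i false = t.getD i false := by
  obtain ⟨r, rfl⟩ := h; rw [List.getD_append _ _ _ _ hi]

lemma prefix_of_getD {t p : List Bool} (h : t.length ≤ p.length)
    (he : ∀ i < t.length, p.getD i false = t.getD i false) : t <+: p := by
  have ht : t = p.take t.length := by
    apply List.ext_getElem (by simp [h])
    intro i h1 h2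
    have := he i h1
    rw [List.getD_eq_getElem?_getD, List.getElem?_eq_getElem (by omega),
      List.getD_eq_getElem?_getD, List.getElem?_eq_getElem h1] at this
    simp at this
    simp [List.getElem_take, this]
  rw [ht]; exact List.take_prefix _ _

lemma getD_append_last (t : List Bool) (b : Bool) :
    (t ++ [b]).getD t.length false = b := by
  simp [List.getD_append_right]

lemma decomp_of_prefix {t l : List Bool} (hl : l.length = t.length + 1)
    (hpre : t <+: l) : l = t ++ [l.getD t.length false] := by
  obtain ⟨r, rfl⟩ := hpre
  have hr : r.length = 1 := by simp at hl; omega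
  obtain ⟨b, rfl⟩ := List.length_eq_one_iff.1 hr
  rw [getD_append_last]

/-- Every sequence matches its own initial segment. -/
lemma matches_ofFn (w : ℕ → Bool) (n : ℕ) :
    Matches (List.ofFn (fun i : Fin n => w i)) w := by
  intro i hi
  rw [List.length_ofFn] at hi
  rw [List.getD_eq_getElem?_getD, List.getElem?_ofFn]
  simp [List.ofFnNthVal, hi]

lemma finite_len (n : ℕ) : {l : List Bool | l.length = n}.Finite := by
  induction n with
  | zero =>
    have : {l : List Bool | l.length = 0} = {[]} := by
      ext l; simp [List.length_eq_zero_iff]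
    rw [this]; exact Set.finite_singleton _
  | succ n ih =>
    have : {l : List Bool | l.length = n + 1} =
        Set.image2 (· :: ·) Set.univ {l | l.length = n} := by
      ext l
      constructor
      · intro hl
        cases l with
        | nil => simp at hl
        | cons b l' => exact ⟨b, trivial, l', by simpa using hl, rfl⟩
      · rintro ⟨b, -, l', hl', rfl⟩
        simpa using hl'
    rw [this]
    exact Set.Finite.image2 _ Set.finite_univ ih

/-- The set of binary strings of a fixed length is a maximal prefix code. -/
lemma maxPrefixCode_len (n : ℕ) : MaxPrefixCode {l : List Bool | l.length = n} := by
  refine ⟨finite_len n, ?_, ?_⟩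
  · intro p hp q hq hpq
    exact hpq.eq_of_length (hp.trans hq.symm)
  · intro w
    refine ⟨List.ofFn (fun i : Fin n => w i), by simp, fun k => w (k + n), ?_⟩
    funext k
    by_cases h : k < n
    · rw [catC_lt (by simpa using h)]
      exact matches_ofFn w n k (by simpa using h)
    · rw [catC_ge (by simpa using Nat.not_lt.1 h)]
      simp [Nat.sub_add_cancel (Nat.not_lt.1 h)]

lemma matches_catC {t p : List Bool} {u : ℕ → Bool} (hlen : t.length ≤ p.length) :
    Matches t (catC p u) ↔ t <+: p := by
  constructor
  · intro h
    apply prefix_of_getD hlen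
    intro i hi
    have := h i hi
    rwa [catC_lt (lt_of_lt_of_le hi hlen)] at this
  · intro h i hi
    rw [catC_lt (lt_of_lt_of_le hi hlen), getD_prefix hi h]

/-- `flipAt t` is an element of the Thompson group `V`. -/
lemma inV_flipAt (t : List Bool) : InV (flipAt t) := by
  refine ⟨(flipAt_involutive t).bijective, {l | l.length = t.length + 1},
    {l | l.length = t.length + 1}, maxPrefixCode_len _, maxPrefixCode_len _,
    fun l => if t <+: l then t ++ [!(l.getD t.length false)] else l, ?_, ?_⟩
  · have hFF : ∀ l ∈ {l : List Bool | l.length = t.length + 1},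
        (fun l => if t <+: l then t ++ [!(l.getD t.length false)] else l)
        ((fun l => if t <+: l then t ++ [!(l.getD t.length false)] else l) l) = l := by
      intro l hl
      by_cases hpre : t <+: l
      · simp only [hpre, if_true]
        rw [if_pos (List.prefix_append t _), getD_append_last, Bool.not_not]
        exact (decomp_of_prefix hl hpre).symm
      · simp only [hpre, if_false, if_neg hpre]
    have hmap : Set.MapsTo (fun l => if t <+: l then t ++ [!(l.getD t.length false)] else l)
        {l : List Bool | l.length = t.length + 1} {l : List Bool | l.length = t.length + 1} := by
      intro l hl
      by_cases hpre : t <+: l <;> simp [hpre, Set.mem_setOf_eq] at hl ⊢ <;> omega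
    refine ⟨hmap, ?_, ?_⟩
    · intro a ha b hb hab
      have h1 := hFF a ha
      rw [hab, hFF b hb] at h1
      exact h1.symm
    · intro q hq
      exact ⟨_, hmap hq, hFF q hq⟩
  · intro p hp u
    have hp' : p.length = t.length + 1 := hp
    have hlen : t.length ≤ p.length := by omega
    by_cases hpre : t <+: p
    · have hF : (fun l : List Bool => if t <+: l then t ++ [!(l.getD t.length false)] else l) p
          = t ++ [!(p.getD t.length false)] := by simp [hpre]
      rw [hF]
      have hm : Matches t (catC p u) := (matches_catC hlen).2 hpre
      funext k
      rcases lt_trichotomy k t.length with hk | hk | hk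
      · rw [flipAt_lt hk, catC_lt (by omega), catC_lt (by simp; omega),
          getD_prefix hk hpre, getD_prefix hk (List.prefix_append t _)]
      · subst hk
        rw [flipAt_of_matches hm, catC_lt (by omega), catC_lt (by simp),
          getD_append_last]
      · rw [flipAt_of_ne (by omega), catC_ge (by omega), catC_ge (by simp; omega)]
        simp [hp']
    · have hF : (fun l : List Bool => if t <+: l then t ++ [!(l.getD t.length false)] else l) p
          = p := by simp [hpre]
      rw [hF, flipAt_of_not_matches (fun hm => hpre ((matches_catC hlen).1 hm))]

/-- If `t` starts with `false`, then `flipAt t` fixes all sequences starting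
with `true`. -/
lemma pFix_flipAt {t : List Bool} (ht : t.getD 0 false = false) (hne : 0 < t.length) :
    pFixV true (flipAt t) := by
  intro u
  apply flipAt_of_not_matches
  intro hm
  have h0 := hm 0 hne
  rw [catC_single_zero, ht] at h0
  exact Bool.noConfusion h0

end CommAux

open CommAux in
/-- The commutation test: `g ∈ pFix_V(0)` iff `g` commutes with every element
of `pFix_V(1)`. -/
theorem commutation_test (g : (ℕ → Bool) → (ℕ → Bool)) (hg : InV g) :
    pFixV false g ↔
      ∀ f : (ℕ → Bool) → (ℕ → Bool), InV f → pFixV true f →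
        g ∘ f = f ∘ g := by
  constructor
  · -- forward direction
    intro h f hf hf1
    funext w
    simp only [Function.comp_apply]
    cases hw : w 0 with
    | true =>
      rw [fix_of hf1 hw]
      exact (fix_of hf1 (bit_preserve hg.1.injective h (by simp [hw]))).symm
    | false =>
      rw [fix_of h hw, fix_of h (bit_preserve hf.1.injective hf1 (by simp [hw]))]
  · -- reverse direction
    intro h u
    set w := catC [false] u with hwdef
    have hw0 : w 0 = false := catC_single_zero _ _
    -- step 1 : g w starts with false
    have hgw0 : g w 0 = false := by
      by_contra hb
      have hgw0' : g w 0 = true := by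
        rcases Bool.eq_false_or_eq_true (g w 0) with h' | h'
        · exact h'
        · exact absurd h' hb
      have hpf : pFixV true (flipAt [false]) := pFix_flipAt rfl (by simp)
      have hcomm := h (flipAt [false]) (inV_flipAt _) hpf
      have hcw : g (flipAt [false] w) = flipAt [false] (g w) := congrFun hcomm w
      rw [fix_of hpf hgw0'] at hcw
      have hfww : flipAt [false] w = w := hg.1.injective hcw
      have hmm : Matches [false] w := by
        intro i hi
        simp only [List.length_singleton] at hi
        have hi0 : i = 0 := by omega
        subst hi0
        simpa using hw0
      have hcontra := congrFun hfww ([false].length)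
      rw [flipAt_of_matches hmm] at hcontra
      simp at hcontra
    -- step 2 : g w = w
    by_contra hne
    obtain ⟨m, hm⟩ := Function.ne_iff.1 hne
    set t : List Bool := List.ofFn (fun i : Fin (m+1) => g w i) with htdef
    have htlen : t.length = m + 1 := by simp [htdef]
    have hmgw : Matches t (g w) := matches_ofFn (g w) (m+1)
    have ht0 : t.getD 0 false = false := by
      rw [← hmgw 0 (by omega)]
      exact hgw0
    have hcomm := h (flipAt t) (inV_flipAt t) (pFix_flipAt ht0 (by omega))
    have hcw : g (flipAt t w) = flipAt t (g w) := congrFun hcomm w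
    -- flipAt t fixes w since w differs from t at coordinate m
    have hnm : ¬ Matches t w := by
      intro hmm
      have h1 := hmm m (by omega)
      have h2 := hmgw m (by omega)
      exact hm (h2.trans h1.symm)
    rw [flipAt_of_not_matches hnm] at hcw
    -- but flipAt t moves g w
    have hcontra := congrFun hcw t.length
    rw [flipAt_of_matches hmgw] at hcontra
    simp at hcontra
end
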